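/- Let R be a commutative ring with unity, S = R[x₁,…,x_k], M an S-module, and M̄ = (Mₙ)_{n∈ℕ} an acceptable filtering of M, i.e. an increasing filtering in which each xᵢ has degree 1 and the blow-up Rees(M̄) is finitely generated as an S[y]-module. Then there exists d ∈ ℕ such that: (i) M_d generates M as an S-module; and (ii) for every n ∈ ℕ, M_{n+d} = Sₙ·M_d, where Sₙ is the set of polynomials in S of total degree at most n. (Upward Artin–Rees lemma.) -/

import Mathlib

open scoped ENNReal

/-- A (generalized) length function on the category of `R`-modules, with values in
`ℝ≥0 ∪ {∞} = ℝ≥0∞`: it vanishes on the zero module, is invariant under isomorphism, is additive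
on short exact sequences (equivalently, `λ(M) = λ(N) + λ(M/N)` for every submodule `N ≤ M`), and
is the supremum of its values on finitely generated submodules. -/
structure LengthFunction (R : Type) [CommRing R] : Type 1 where
  l : (M : Type) → [AddCommGroup M] → [Module R M] → ℝ≥0∞
  l_zero : ∀ (M : Type) [AddCommGroup M] [Module R M], Subsingleton M → l M = 0
  l_congr : ∀ (M N : Type) [AddCommGroup M] [Module R M] [AddCommGroup N] [Module R N],
      (M ≃ₗ[R] N) → l M = l N
  l_add : ∀ (M : Type) [AddCommGroup M] [Module R M] (N : Submodule R M),
      l M = l N + l (M ⧸ N)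
  l_fg_sup : ∀ (M : Type) [AddCommGroup M] [Module R M],
      l M = ⨆ (N : Submodule R M) (_ : N.FG), l N

/-- `Sₙ · V`: the `R`-submodule of `M` generated by the products `p • v` with `p ∈ Sₙ` (the
polynomials of total degree at most `n` in `S = R[x₁,…,x_k]`) and `v ∈ V`. -/
def degSmul {R : Type} [CommRing R] (k : ℕ) {M : Type} [AddCommGroup M] [Module R M]
    [Module (MvPolynomial (Fin k) R) M] [IsScalarTower R (MvPolynomial (Fin k) R) M]
    (n : ℕ) (V : Submodule R M) : Submodule R M :=
  Submodule.span R
    {m : M | ∃ p ∈ MvPolynomial.restrictTotalDegree (Fin k) R n, ∃ v ∈ V, p • v = m}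
/-- The ring homomorphism `S[y] → S[X]` (for `S = R[x₁,…,x_k]`) sending `y ↦ X` and
`xᵢ ↦ xᵢ·X^{γᵢ}`; it encodes the action on the blow-up (Rees) module: `xᵢ` acts with degree
`γᵢ` and `y` with degree `1`. -/
noncomputable def twist {R : Type} [CommRing R] {k : ℕ} (γ : Fin k → ℕ) :
    Polynomial (MvPolynomial (Fin k) R) →+* Polynomial (MvPolynomial (Fin k) R) :=
  Polynomial.eval₂RingHom
    (MvPolynomial.eval₂Hom (Polynomial.C.comp MvPolynomial.C)
      (fun i => Polynomial.C (MvPolynomial.X i) * Polynomial.X ^ γ i))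
    Polynomial.X

/-- Auxiliary lemma: the coefficients of `twist γ p` are compatible with any filtration `𝓜`
which is increasing and satisfies `xᵢ • 𝓜 n ⊆ 𝓜 (n + γᵢ)`. -/
theorem twist_coeff_smul_mem {R : Type} [CommRing R] {k : ℕ} {M : Type} [AddCommGroup M]
    [Module R M] [Module (MvPolynomial (Fin k) R) M]
    [IsScalarTower R (MvPolynomial (Fin k) R) M]
    (γ : Fin k → ℕ) (𝓜 : ℕ → Submodule R M) (hmono : Monotone 𝓜)
    (hx : ∀ (i : Fin k) (n : ℕ), ∀ m ∈ 𝓜 n,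
      (MvPolynomial.X i : MvPolynomial (Fin k) R) • m ∈ 𝓜 (n + γ i))
    (p : Polynomial (MvPolynomial (Fin k) R)) :
    ∀ a b : ℕ, ∀ m ∈ 𝓜 b, ((twist γ p).coeff a) • m ∈ 𝓜 (a + b) := by
  classical
  set S := MvPolynomial (Fin k) R
  set T : Set (Polynomial S) :=
    {q | ∀ a b : ℕ, ∀ m ∈ 𝓜 b, (q.coeff a) • m ∈ 𝓜 (a + b)} with hT
  have hadd : ∀ q q' : Polynomial S, q ∈ T → q' ∈ T → q + q' ∈ T := by
    intro q q' hq hq' a b m hm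
    rw [Polynomial.coeff_add, add_smul]
    exact (𝓜 (a + b)).add_mem (hq a b m hm) (hq' a b m hm)
  have hmul : ∀ q q' : Polynomial S, q ∈ T → q' ∈ T → q * q' ∈ T := by
    intro q q' hq hq' a b m hm
    rw [Polynomial.coeff_mul, Finset.sum_smul]
    refine Submodule.sum_mem _ ?_
    intro x hxmem
    rw [mul_smul]
    have h1 : q'.coeff x.2 • m ∈ 𝓜 (x.2 + b) := hq' x.2 b m hm
    have h2 := hq x.1 (x.2 + b) _ h1
    rw [Finset.HasAntidiagonal.mem_antidiagonal] at hxmem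
    rwa [← add_assoc, hxmem] at h2
  have hCC : ∀ r : R, (Polynomial.C (MvPolynomial.C r : S)) ∈ T := by
    intro r a b m hm
    rcases Nat.eq_zero_or_pos a with rfl | ha
    · rw [Polynomial.coeff_C_zero]
      have : (MvPolynomial.C r : S) • m = r • m := by
        rw [← MvPolynomial.algebraMap_eq, algebraMap_smul]
      rw [this, zero_add]
      exact (𝓜 b).smul_mem r hm
    · rw [Polynomial.coeff_C, if_neg (by omega), zero_smul]
      exact (𝓜 (a + b)).zero_mem
  have hX : (Polynomial.X : Polynomial S) ∈ T := by
    intro a b m hm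
    rw [Polynomial.coeff_X]
    by_cases h : (1 : ℕ) = a
    · rw [if_pos h, one_smul]
      exact hmono (by omega) hm
    · rw [if_neg h, zero_smul]
      exact (𝓜 (a + b)).zero_mem
  have hXi : ∀ i : Fin k, (Polynomial.C (MvPolynomial.X i : S) * Polynomial.X ^ γ i) ∈ T := by
    intro i a b m hm
    rw [Polynomial.coeff_C_mul, Polynomial.coeff_X_pow]
    by_cases h : a = γ i
    · rw [if_pos h, mul_one]
      have := hx i b m hm
      rwa [h, add_comm]
    · rw [if_neg h, mul_zero, zero_smul]
      exact (𝓜 (a + b)).zero_mem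
  have hinner : ∀ s : S,
      (MvPolynomial.eval₂Hom (Polynomial.C.comp MvPolynomial.C)
        (fun i => Polynomial.C (MvPolynomial.X i) * Polynomial.X ^ γ i) s) ∈ T := by
    intro s
    induction s using MvPolynomial.induction_on with
    | C r => simpa using hCC r
    | add s s' hs hs' => rw [map_add]; exact hadd _ _ hs hs'
    | mul_X s i hs =>
        rw [map_mul]
        refine hmul _ _ hs ?_
        simpa using hXi i
  suffices h : twist γ p ∈ T by exact h
  induction p using Polynomial.induction_on with
  | C s =>
      show Polynomial.eval₂ _ _ (Polynomial.C s) ∈ T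
      rw [Polynomial.eval₂_C]
      exact hinner s
  | add q q' hq hq' =>
      rw [map_add]; exact hadd _ _ hq hq'
  | monomial n s hq =>
      have : (Polynomial.C s * Polynomial.X ^ (n + 1)) =
          (Polynomial.C s * Polynomial.X ^ n) * Polynomial.X := by ring
      rw [this, map_mul]
      refine hmul _ _ hq ?_
      show Polynomial.eval₂ _ _ Polynomial.X ∈ T
      rw [Polynomial.eval₂_X]
      exact hX

/-- The ambient module `⊕ₙ M yⁿ` of the blow-up construction: the polynomial module
`M[y] = ⊕ₙ M yⁿ` over `S = R[x₁,…,x_k]`, regarded as an `S[y]`-module through `twist γ`, so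
that `xᵢ • (v yʲ) = (xᵢ v) y^{j+γᵢ}` and `y • (v yʲ) = v y^{j+1}`. -/
def ReesAmb (R : Type) [CommRing R] {k : ℕ} (_γ : Fin k → ℕ) (M : Type) [AddCommGroup M]
    [Module R M] [Module (MvPolynomial (Fin k) R) M] : Type :=
  PolynomialModule (MvPolynomial (Fin k) R) M

section Rees
variable {R : Type} [CommRing R] {k : ℕ} {M : Type} [AddCommGroup M] [Module R M]
  [Module (MvPolynomial (Fin k) R) M] [IsScalarTower R (MvPolynomial (Fin k) R) M]

noncomputable instance (γ : Fin k → ℕ) : AddCommGroup (ReesAmb R γ M) :=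
  inferInstanceAs (AddCommGroup (PolynomialModule (MvPolynomial (Fin k) R) M))

/-- The twisted `S[y]`-module structure on `⊕ₙ M yⁿ`. -/
noncomputable instance (γ : Fin k → ℕ) :
    Module (Polynomial (MvPolynomial (Fin k) R)) (ReesAmb R γ M) :=
  Module.compHom (PolynomialModule (MvPolynomial (Fin k) R) M) (twist γ)

noncomputable instance (γ : Fin k → ℕ) : Module R (ReesAmb R γ M) :=
  inferInstanceAs (Module R (PolynomialModule (MvPolynomial (Fin k) R) M))

/-- The underlying finitely supported function `ℕ →₀ M` of an element of `ReesAmb R γ M`;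
`ReesAmb.coe f n` is the coefficient of `yⁿ` in `f`. -/
def ReesAmb.coe {γ : Fin k → ℕ} (f : ReesAmb R γ M) : ℕ →₀ M :=
  (f : PolynomialModule (MvPolynomial (Fin k) R) M).coeff

/-- The blow-up (Rees) module `Rees(M̄) = ⊕ₙ Mₙ yⁿ` of an increasing filtering `M̄ = (Mₙ)ₙ`
with degrees `γ̄`: the `S[y]`-submodule of `ReesAmb R γ M` consisting of the elements whose
`n`-th coefficient lies in `Mₙ` for every `n`. -/
noncomputable def reesSubmodule (γ : Fin k → ℕ) (𝓜 : ℕ → Submodule R M)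
    (hmono : Monotone 𝓜)
    (hx : ∀ (i : Fin k) (n : ℕ), ∀ m ∈ 𝓜 n,
      (MvPolynomial.X i : MvPolynomial (Fin k) R) • m ∈ 𝓜 (n + γ i)) :
    Submodule (Polynomial (MvPolynomial (Fin k) R)) (ReesAmb R γ M) where
  carrier := {f | ∀ n, ReesAmb.coe f n ∈ 𝓜 n}
  zero_mem' := by intro n; exact (𝓜 n).zero_mem
  add_mem' := by
    intro f g hf hg n
    exact (𝓜 n).add_mem (hf n) (hg n)
  smul_mem' := by
    intro p f hf n
    let g : PolynomialModule (MvPolynomial (Fin k) R) M := f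
    have h : ((twist γ p) • g).coeff n ∈ 𝓜 n := by
      rw [PolynomialModule.smul_apply]
      refine Submodule.sum_mem _ ?_
      intro x hxmem
      rw [Finset.HasAntidiagonal.mem_antidiagonal] at hxmem
      have hmem := twist_coeff_smul_mem γ 𝓜 hmono hx p x.1 x.2 (g.coeff x.2) (hf x.2)
      rwa [hxmem] at hmem
    exact h

/-- The `n`-th graded piece `Mₙ yⁿ` of the blow-up module. -/
noncomputable def gradedPiece (γ : Fin k → ℕ) (𝓜 : ℕ → Submodule R M) (n : ℕ) :
    Submodule R (ReesAmb R γ M) :=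
  (𝓜 n).map ((PolynomialModule.coeffLinearEquiv (MvPolynomial (Fin k) R) R).symm.toLinearMap.comp
    (Finsupp.lsingle n : M →ₗ[R] (ℕ →₀ M)))

end Rees

section ARaux
variable {R : Type} [CommRing R] {k : ℕ} {M : Type} [AddCommGroup M] [Module R M]
  [Module (MvPolynomial (Fin k) R) M] [IsScalarTower R (MvPolynomial (Fin k) R) M]

theorem Xpow_smul_mem_filt (𝓜 : ℕ → Submodule R M)
    (hx : ∀ (i : Fin k) (n : ℕ), ∀ m ∈ 𝓜 n,
      (MvPolynomial.X i : MvPolynomial (Fin k) R) • m ∈ 𝓜 (n + 1)) :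
    ∀ (e : ℕ) (i : Fin k) (b : ℕ), ∀ v ∈ 𝓜 b,
      ((MvPolynomial.X i : MvPolynomial (Fin k) R) ^ e) • v ∈ 𝓜 (b + e) := by
  intro e
  induction e with
  | zero => intro i b v hv; simpa using hv
  | succ e ih =>
    intro i b v hv
    have h1 := ih i (b + 1) _ (hx i b v hv)
    rw [pow_succ, mul_smul]
    have : b + 1 + e = b + (e + 1) := by omega
    rwa [this] at h1

theorem monomial_smul_mem_filt (𝓜 : ℕ → Submodule R M)
    (hx : ∀ (i : Fin k) (n : ℕ), ∀ m ∈ 𝓜 n,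
      (MvPolynomial.X i : MvPolynomial (Fin k) R) • m ∈ 𝓜 (n + 1)) :
    ∀ (α : Fin k →₀ ℕ) (b : ℕ), ∀ v ∈ 𝓜 b,
      (MvPolynomial.monomial α (1 : R)) • v ∈ 𝓜 (b + α.sum fun _ e => e) := by
  intro α
  induction α using Finsupp.induction with
  | zero =>
    intro b v hv
    simpa [MvPolynomial.monomial_zero'] using hv
  | single_add i e β hi he ih =>
    intro b v hv
    have hmono : (MvPolynomial.monomial (Finsupp.single i e + β) (1 : R))
        = MvPolynomial.X i ^ e * MvPolynomial.monomial β 1 := by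
      rw [MvPolynomial.X_pow_eq_monomial, MvPolynomial.monomial_mul, one_mul]
    have h1 := ih b v hv
    have h2 := Xpow_smul_mem_filt 𝓜 hx e i _ _ h1
    rw [hmono, mul_smul]
    have hsum : ((Finsupp.single i e + β).sum fun _ x => x)
        = e + (β.sum fun _ x => x) := by
      rw [Finsupp.sum_add_index' (fun _ => rfl) (fun _ _ _ => rfl),
        Finsupp.sum_single_index rfl]
    have : b + (β.sum fun _ x => x) + e
        = b + ((Finsupp.single i e + β).sum fun _ x => x) := by omega
    rwa [this] at h2

theorem smul_mem_filt_of_deg_le (𝓜 : ℕ → Submodule R M) (hmono : Monotone 𝓜)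
    (hx : ∀ (i : Fin k) (n : ℕ), ∀ m ∈ 𝓜 n,
      (MvPolynomial.X i : MvPolynomial (Fin k) R) • m ∈ 𝓜 (n + 1))
    {n b : ℕ} (q : MvPolynomial (Fin k) R) (hq : q.totalDegree ≤ n) :
    ∀ v ∈ 𝓜 b, q • v ∈ 𝓜 (b + n) := by
  intro v hv
  have hrw : q • v = ∑ α ∈ q.support, (MvPolynomial.monomial α (q.coeff α)) • v := by
    rw [← Finset.sum_smul, ← q.as_sum]
  rw [hrw]
  refine Submodule.sum_mem _ ?_
  intro α hα
  have hmon : (MvPolynomial.monomial α (q.coeff α))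
      = MvPolynomial.C (q.coeff α) * MvPolynomial.monomial α 1 := by
    rw [MvPolynomial.C_mul_monomial, mul_one]
  rw [hmon, mul_smul, ← MvPolynomial.algebraMap_eq, algebraMap_smul]
  refine Submodule.smul_mem _ _ ?_
  have h1 := monomial_smul_mem_filt 𝓜 hx α b v hv
  exact hmono (by
    have := MvPolynomial.le_totalDegree hα
    omega) h1

theorem degSmul_le_filt (𝓜 : ℕ → Submodule R M) (hmono : Monotone 𝓜)
    (hx : ∀ (i : Fin k) (n : ℕ), ∀ m ∈ 𝓜 n,
      (MvPolynomial.X i : MvPolynomial (Fin k) R) • m ∈ 𝓜 (n + 1))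
    (n d : ℕ) : degSmul k n (𝓜 d) ≤ 𝓜 (n + d) := by
  rw [degSmul]
  refine Submodule.span_le.mpr ?_
  rintro m ⟨p, hp, v, hv, rfl⟩
  have := smul_mem_filt_of_deg_le 𝓜 hmono hx p
    ((MvPolynomial.mem_restrictTotalDegree _ _ _).mp hp) v hv
  rwa [add_comm] at this

theorem finsupp_split {k : ℕ} (n : ℕ) : ∀ (e : ℕ) (α : Fin k →₀ ℕ),
    (α.sum fun _ x => x) ≤ n + e →
    ∃ β₁ β₂ : Fin k →₀ ℕ, α = β₁ + β₂ ∧ (β₁.sum fun _ x => x) ≤ n ∧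
      (β₂.sum fun _ x => x) ≤ e := by
  intro e
  induction e with
  | zero =>
    intro α h
    exact ⟨α, 0, by simp, by simpa using h, by simp⟩
  | succ e ih =>
    intro α h
    by_cases h' : (α.sum fun _ x => x) ≤ n + e
    · obtain ⟨β₁, β₂, h1, h2, h3⟩ := ih α h'
      exact ⟨β₁, β₂, h1, h2, h3.trans (Nat.le_succ e)⟩
    · have hne : α ≠ 0 := by
        rintro rfl
        simp at h'
      have : ∃ i, α i ≠ 0 := by
        by_contra hc
        push_neg at hc
        exact hne (Finsupp.ext fun i => hc i)
      obtain ⟨i, hi⟩ := this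
      have hle : Finsupp.single i 1 ≤ α := by
        rw [Finsupp.single_le_iff]; omega
      have hαeq : (α - Finsupp.single i 1) + Finsupp.single i 1 = α :=
        tsub_add_cancel_of_le hle
      have hsum : ((α - Finsupp.single i 1).sum fun _ x => x) + 1
          = α.sum fun _ x => x := by
        conv_rhs => rw [← hαeq]
        rw [Finsupp.sum_add_index' (fun _ => rfl) (fun _ _ _ => rfl),
          Finsupp.sum_single_index rfl]
      obtain ⟨β₁, β₂, h1, h2, h3⟩ := ih (α - Finsupp.single i 1) (by omega)
      refine ⟨β₁, β₂ + Finsupp.single i 1, ?_, h2, ?_⟩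
      · rw [← hαeq, h1, add_assoc]
      · rw [Finsupp.sum_add_index' (fun _ => rfl) (fun _ _ _ => rfl),
          Finsupp.sum_single_index rfl]
        omega

theorem twist_coeff_totalDegree {R : Type} [CommRing R] {k : ℕ}
    (p : Polynomial (MvPolynomial (Fin k) R)) :
    ∀ a : ℕ, ((twist (fun _ : Fin k => 1) p).coeff a).totalDegree ≤ a := by
  classical
  set S := MvPolynomial (Fin k) R
  set γ : Fin k → ℕ := fun _ => 1 with hγ
  set T : Set (Polynomial S) := {q | ∀ a : ℕ, (q.coeff a).totalDegree ≤ a} with hT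
  have hadd : ∀ q q' : Polynomial S, q ∈ T → q' ∈ T → q + q' ∈ T := by
    intro q q' hq hq' a
    rw [Polynomial.coeff_add]
    exact (MvPolynomial.totalDegree_add _ _).trans (max_le (hq a) (hq' a))
  have hmul : ∀ q q' : Polynomial S, q ∈ T → q' ∈ T → q * q' ∈ T := by
    intro q q' hq hq' a
    rw [Polynomial.coeff_mul]
    refine (MvPolynomial.totalDegree_finset_sum _ _).trans (Finset.sup_le ?_)
    intro x hxmem
    rw [Finset.HasAntidiagonal.mem_antidiagonal] at hxmem
    calc (q.coeff x.1 * q'.coeff x.2).totalDegree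
        ≤ (q.coeff x.1).totalDegree + (q'.coeff x.2).totalDegree :=
          MvPolynomial.totalDegree_mul _ _
      _ ≤ x.1 + x.2 := add_le_add (hq x.1) (hq' x.2)
      _ = a := hxmem
  have hCC : ∀ r : R, (Polynomial.C (MvPolynomial.C r : S)) ∈ T := by
    intro r a
    rw [Polynomial.coeff_C]
    by_cases h : a = 0
    · rw [if_pos h]; simpa [h] using (MvPolynomial.totalDegree_C r).le
    · rw [if_neg h]; simp
  have hX : (Polynomial.X : Polynomial S) ∈ T := by
    intro a
    rw [Polynomial.coeff_X]
    by_cases h : (1 : ℕ) = a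
    · rw [if_pos h]; simpa using h.le.trans (le_refl a)
    · rw [if_neg h]; simp
  have hXi : ∀ i : Fin k, (Polynomial.C (MvPolynomial.X i : S) * Polynomial.X ^ γ i) ∈ T := by
    intro i a
    rw [Polynomial.coeff_C_mul, Polynomial.coeff_X_pow]
    by_cases h : a = γ i
    · rw [if_pos h, mul_one]
      simp only [hγ] at h ⊢
      rw [h]
      rw [← pow_one (MvPolynomial.X i : MvPolynomial (Fin k) R),
        MvPolynomial.X_pow_eq_monomial]
      refine (MvPolynomial.totalDegree_monomial_le _ _).trans ?_
      simp
    · rw [if_neg h, mul_zero]; simp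
  have hinner : ∀ s : S,
      (MvPolynomial.eval₂Hom (Polynomial.C.comp MvPolynomial.C)
        (fun i => Polynomial.C (MvPolynomial.X i) * Polynomial.X ^ γ i) s) ∈ T := by
    intro s
    induction s using MvPolynomial.induction_on with
    | C r => simpa using hCC r
    | add s s' hs hs' => rw [map_add]; exact hadd _ _ hs hs'
    | mul_X s i hs =>
        rw [map_mul]
        refine hmul _ _ hs ?_
        simpa using hXi i
  suffices h : twist γ p ∈ T by exact h
  induction p using Polynomial.induction_on with
  | C s =>
      show Polynomial.eval₂ _ _ (Polynomial.C s) ∈ T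
      rw [Polynomial.eval₂_C]
      exact hinner s
  | add q q' hq hq' =>
      rw [map_add]; exact hadd _ _ hq hq'
  | monomial n s hq =>
      have : (Polynomial.C s * Polynomial.X ^ (n + 1)) =
          (Polynomial.C s * Polynomial.X ^ n) * Polynomial.X := by ring
      rw [this, map_mul]
      refine hmul _ _ hq ?_
      show Polynomial.eval₂ _ _ Polynomial.X ∈ T
      rw [Polynomial.eval₂_X]
      exact hX

theorem smul_mem_degSmul (𝓜 : ℕ → Submodule R M) (hmono : Monotone 𝓜)
    (hx : ∀ (i : Fin k) (n : ℕ), ∀ m ∈ 𝓜 n,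
      (MvPolynomial.X i : MvPolynomial (Fin k) R) • m ∈ 𝓜 (n + 1))
    {n d b e : ℕ} (hbe : b + e ≤ d) (q : MvPolynomial (Fin k) R)
    (hq : q.totalDegree ≤ n + e) :
    ∀ v ∈ 𝓜 b, q • v ∈ degSmul k n (𝓜 d) := by
  intro v hv
  have hrw : q • v = ∑ α ∈ q.support, (MvPolynomial.monomial α (q.coeff α)) • v := by
    rw [← Finset.sum_smul, ← q.as_sum]
  rw [hrw]
  refine Submodule.sum_mem _ ?_
  intro α hα
  obtain ⟨β₁, β₂, hsplit, hβ₁, hβ₂⟩ := finsupp_split n e α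
    ((MvPolynomial.le_totalDegree hα).trans hq)
  have hmon : (MvPolynomial.monomial α (q.coeff α))
      = MvPolynomial.C (q.coeff α) *
        (MvPolynomial.monomial β₁ 1 * MvPolynomial.monomial β₂ 1) := by
    rw [MvPolynomial.monomial_mul, MvPolynomial.C_mul_monomial, ← hsplit]
    norm_num
  rw [hmon, mul_smul, ← MvPolynomial.algebraMap_eq, algebraMap_smul, mul_smul]
  refine Submodule.smul_mem _ _ ?_
  refine Submodule.subset_span ⟨MvPolynomial.monomial β₁ 1, ?_,
    (MvPolynomial.monomial β₂ 1) • v, ?_, rfl⟩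
  · rw [MvPolynomial.mem_restrictTotalDegree]
    exact (MvPolynomial.totalDegree_monomial_le β₁ 1).trans hβ₁
  · have h1 := monomial_smul_mem_filt 𝓜 hx β₂ b v hv
    exact hmono (by omega) h1

end ARaux

/-- upward Artin–Rees: Let `R` be a commutative ring, `S = R[x₁,…,x_k]`, `M` an
`S`-module, and `M̄ = (Mₙ)ₙ` an acceptable filtering of `M`: an increasing filtering in which
each `xᵢ` has degree `1` and whose blow-up `Rees(M̄)` is finitely generated as an
`S[y]`-module.  Then there is `d ∈ ℕ` such that (i) `M_d` generates `M` as an `S`-module, and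
(ii) for every `n`, `M_{n+d} = Sₙ · M_d` (with `Sₙ` the polynomials of total degree `≤ n`). -/
theorem stmt_3 {R : Type} [CommRing R] {k : ℕ} {M : Type} [AddCommGroup M] [Module R M]
    [Module (MvPolynomial (Fin k) R) M] [IsScalarTower R (MvPolynomial (Fin k) R) M]
    (𝓜 : ℕ → Submodule R M)
    (hmono : Monotone 𝓜) (hexh : (⨆ n, 𝓜 n) = ⊤)
    (hx : ∀ (i : Fin k) (n : ℕ), ∀ m ∈ 𝓜 n,
      (MvPolynomial.X i : MvPolynomial (Fin k) R) • m ∈ 𝓜 (n + 1))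
    (hfg : Module.Finite (Polynomial (MvPolynomial (Fin k) R))
      (reesSubmodule (fun _ => 1) 𝓜 hmono hx)) :
    ∃ d : ℕ,
      Submodule.span (MvPolynomial (Fin k) R) ((𝓜 d : Submodule R M) : Set M) = ⊤ ∧
      ∀ n : ℕ, 𝓜 (n + d) = degSmul k n (𝓜 d) := by
  classical
  set γ : Fin k → ℕ := fun _ => 1 with hγ
  set N := reesSubmodule γ 𝓜 hmono hx with hN
  obtain ⟨s, hs⟩ := hfg.fg_top
  set d : ℕ := s.sup (fun g => ((ReesAmb.coe (g.1 : ReesAmb R γ M)).support.sup id)) with hd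
  -- the generators have support contained in [0, d]
  have hbd : ∀ g ∈ s, ∀ b : ℕ, d < b → ReesAmb.coe (g.1 : ReesAmb R γ M) b = 0 := by
    intro g hg b hb
    by_contra hne
    have hmem : b ∈ (ReesAmb.coe (g.1 : ReesAmb R γ M)).support :=
      Finsupp.mem_support_iff.mpr hne
    have h1 : b ≤ (ReesAmb.coe (g.1 : ReesAmb R γ M)).support.sup id :=
      Finset.le_sup (f := id) hmem
    have h2 : ((ReesAmb.coe (g.1 : ReesAmb R γ M)).support.sup id) ≤ d := by
      rw [hd]
      exact Finset.le_sup (f := fun g : N =>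
        ((ReesAmb.coe (g.1 : ReesAmb R γ M)).support.sup id)) hg
    omega
  -- hard inclusion
  have hard : ∀ n : ℕ, 𝓜 (n + d) ≤ degSmul k n (𝓜 d) := by
    intro n m hm
    -- the element m y^(n+d) of the Rees module
    let f₀ : ReesAmb R γ M :=
      PolynomialModule.ofCoeff (MvPolynomial (Fin k) R) (Finsupp.single (n + d) m : ℕ →₀ M)
    have hf₀ : f₀ ∈ N := by
      intro j
      show (Finsupp.single (n + d) m : ℕ →₀ M) j ∈ 𝓜 j
      rw [Finsupp.single_apply]
      by_cases h : n + d = j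
      · rw [if_pos h]; exact h ▸ hm
      · rw [if_neg h]; exact (𝓜 j).zero_mem
    have hmem : (⟨f₀, hf₀⟩ : N) ∈ Submodule.span (Polynomial (MvPolynomial (Fin k) R))
        (↑s : Set N) := by
      rw [hs]; trivial
    rw [Submodule.mem_span_finset] at hmem
    obtain ⟨c, -, hc⟩ := hmem
    have hc' : (∑ g ∈ s, ((c g • g : N) : ReesAmb R γ M)) = f₀ := by
      have := congrArg (fun z : N => (z : ReesAmb R γ M)) hc
      simp only at this
      rw [← this, AddSubmonoidClass.coe_finset_sum]
    have hmval : m = ∑ g ∈ s, ReesAmb.coe ((c g • g : N) : ReesAmb R γ M) (n + d) := by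
      have h1 : ReesAmb.coe f₀ (n + d) = m := Finsupp.single_eq_same
      rw [← h1, ← hc']
      have hcs := PolynomialModule.coeff_sum (R := MvPolynomial (Fin k) R) (M := M) s
        (fun g => ((c g • g : N) : ReesAmb R γ M))
      exact (DFunLike.congr_fun hcs (n + d)).trans (Finsupp.finset_sum_apply s
        (fun g => ReesAmb.coe ((c g • g : N) : ReesAmb R γ M)) (n + d))
    rw [hmval]
    refine Submodule.sum_mem _ ?_
    intro g hg
    -- unfold the twisted action
    have hterm : ReesAmb.coe ((c g • g : N) : ReesAmb R γ M) (n + d)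
        = ∑ x ∈ Finset.HasAntidiagonal.antidiagonal (n + d),
            (twist γ (c g)).coeff x.1 • (ReesAmb.coe (g : ReesAmb R γ M) x.2) := by
      let G : PolynomialModule (MvPolynomial (Fin k) R) M := (g : ReesAmb R γ M)
      show ((twist γ (c g)) • G).coeff (n + d) = _
      rw [PolynomialModule.smul_apply]
      rfl
    rw [hterm]
    refine Submodule.sum_mem _ ?_
    intro x hxmem
    rw [Finset.HasAntidiagonal.mem_antidiagonal] at hxmem
    by_cases hb : x.2 ≤ d
    · have hv : ReesAmb.coe ((g : N) : ReesAmb R γ M) x.2 ∈ 𝓜 x.2 := g.2 x.2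
      refine smul_mem_degSmul 𝓜 hmono hx (e := d - x.2) (by omega) _ ?_ _ hv
      have := twist_coeff_totalDegree (c g) x.1
      have hx1 : x.1 = n + (d - x.2) := by omega
      rw [← hx1]
      exact this
    · rw [hbd g hg x.2 (by omega), smul_zero]
      exact Submodule.zero_mem _
  have hii : ∀ n : ℕ, 𝓜 (n + d) = degSmul k n (𝓜 d) := by
    intro n
    exact le_antisymm (hard n) (degSmul_le_filt 𝓜 hmono hx n d)
  refine ⟨d, ?_, hii⟩
  rw [eq_top_iff]
  intro m _
  have hm : m ∈ ⨆ n, 𝓜 n := by rw [hexh]; trivial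
  rw [Submodule.mem_iSup_of_directed _ hmono.directed_le] at hm
  obtain ⟨j, hj⟩ := hm
  have hj' : m ∈ 𝓜 (j + d) := hmono (Nat.le_add_right j d) hj
  rw [hii j] at hj'
  have : degSmul k j (𝓜 d) ≤
      (Submodule.span (MvPolynomial (Fin k) R)
        ((𝓜 d : Submodule R M) : Set M)).restrictScalars R := by
    rw [degSmul]
    refine Submodule.span_le.mpr ?_
    rintro z ⟨p, _, v, hv, rfl⟩
    exact Submodule.smul_mem _ p (Submodule.subset_span hv)
  exact this hj'
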